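/- Let W = (𝒫,[n]) be an admissible Wilson loop diagram and p = (i, i+2) ∈ 𝒫. If p is the only propagator of 𝒫 incident to the edge i+2, then (i+1, i+3) ∉ 𝒫 and the Wilson loop diagram ((𝒫 ∖ {p}) ∪ {(i+1, i+3)}, [n]) is admissible. Symmetrically, if p is the only propagator of 𝒫 incident to the edge i, then (i−1, i+1) ∉ 𝒫 and the Wilson loop diagram ((𝒫 ∖ {p}) ∪ {(i−1, i+1)}, [n]) is admissible. -/
import Mathlib


/-- `b` lies strictly inside the cyclic interval going (in the increasing cyclic direction)
from `a` to `c` in `ZMod n`. -/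
def Inside {n : ℕ} (a b c : ZMod n) : Prop :=
  0 < (b - a).val ∧ (b - a).val < (c - a).val

/-- Two propagators (given as ordered pairs representing unordered pairs) cross:
exactly one endpoint of `q` lies strictly inside each of the two cyclic intervals into
which the endpoints of `p` divide `ZMod n`. -/
def Cross {n : ℕ} (p q : ZMod n × ZMod n) : Prop :=
  (Inside p.1 q.1 p.2 ∧ Inside p.2 q.2 p.1) ∨
    (Inside p.1 q.2 p.2 ∧ Inside p.2 q.1 p.1)

/-- The support `V_p = {i, i+1, j, j+1}` of a propagator `p = (i,j)`. -/
def propSupp {n : ℕ} (p : ZMod n × ZMod n) : Finset (ZMod n) :=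
  {p.1, p.1 + 1, p.2, p.2 + 1}

/-- The support `V_P` of a multiset of propagators. -/
def multiSupp {n : ℕ} (P : Multiset (ZMod n × ZMod n)) : Finset (ZMod n) :=
  (P.map propSupp).sup

/-- A Wilson loop diagram `(Ps, [n])` is admissible: no two propagators cross,
every nonempty subset `P` of the propagators satisfies `|V_P| ≥ |P| + 3`
(local density), and `n ≥ |Ps| + 4` (global density). -/
def Admissible (n : ℕ) (Ps : Multiset (ZMod n × ZMod n)) : Prop :=
  (∀ p ∈ Ps, ∀ q ∈ Ps, ¬ Cross p q) ∧
  (∀ P : Multiset (ZMod n × ZMod n), P ≤ Ps → P ≠ 0 →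
    Multiset.card P + 3 ≤ (multiSupp P).card) ∧
  Multiset.card Ps + 4 ≤ n


set_option linter.unusedSectionVars false
set_option linter.unusedVariables false

section WLDHelpers
variable {n : ℕ}

lemma inside_rot [NeZero n] {a b c : ZMod n} (h : Inside a b c) : Inside b c a := by
  obtain ⟨h1, h2⟩ := h
  have hy : (c - a).val < n := ZMod.val_lt _
  have e1 : c - b = (c - a) - (b - a) := by ring
  have e2 : a - b = -(b - a) := by ring
  have h3 : (c - b).val = (c - a).val - (b - a).val := by
    rw [e1, ZMod.val_sub (le_of_lt h2)]
  have hbne : b - a ≠ 0 := by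
    intro h0; rw [h0] at h1; simp at h1
  have h4 : (a - b).val = n - (b - a).val := by
    rw [e2, ZMod.neg_val]; simp [hbne]
  constructor <;> omega

lemma inside_shrink [NeZero n] {a b c d : ZMod n} (h1 : Inside a b c) (h2 : Inside a c d) :
    Inside b c d := by
  obtain ⟨h11, h12⟩ := h1; obtain ⟨h21, h22⟩ := h2
  have e1 : c - b = (c - a) - (b - a) := by ring
  have e2 : d - b = (d - a) - (b - a) := by ring
  have h3 : (c - b).val = (c - a).val - (b - a).val := by
    rw [e1, ZMod.val_sub (le_of_lt h12)]
  have h4 : (d - b).val = (d - a).val - (b - a).val := by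
    rw [e2, ZMod.val_sub (le_of_lt (lt_trans h12 h22))]
  constructor <;> omega

lemma cross_symm [NeZero n] {p q : ZMod n × ZMod n} (h : Cross p q) : Cross q p := by
  rcases h with ⟨h1, h2⟩ | ⟨h1, h2⟩
  · exact Or.inr ⟨inside_shrink h1 (inside_rot (inside_rot h2)),
      inside_shrink h2 (inside_rot (inside_rot h1))⟩
  · exact Or.inl ⟨inside_shrink h2 (inside_rot (inside_rot h1)),
      inside_shrink h1 (inside_rot (inside_rot h2))⟩

lemma cross_irrefl (p : ZMod n × ZMod n) : ¬ Cross p p := by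
  rintro (⟨⟨h1, _⟩, _⟩ | ⟨⟨h1, h2⟩, _⟩)
  · simp at h1
  · exact absurd h2 (lt_irrefl _)

@[simp] lemma multiSupp_zero : multiSupp (0 : Multiset (ZMod n × ZMod n)) = ∅ := rfl

@[simp] lemma multiSupp_cons (a : ZMod n × ZMod n) (s : Multiset (ZMod n × ZMod n)) :
    multiSupp (a ::ₘ s) = propSupp a ∪ multiSupp s := by
  simp [multiSupp, Multiset.sup_cons, Finset.sup_eq_union]

lemma multiSupp_singleton (a : ZMod n × ZMod n) :
    multiSupp ({a} : Multiset (ZMod n × ZMod n)) = propSupp a := by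
  rw [show ({a} : Multiset (ZMod n × ZMod n)) = a ::ₘ 0 from rfl, multiSupp_cons,
    multiSupp_zero, Finset.union_empty]

lemma mem_multiSupp {x : ZMod n} {P : Multiset (ZMod n × ZMod n)} :
    x ∈ multiSupp P ↔ ∃ q ∈ P, x ∈ propSupp q := by
  induction P using Multiset.induction with
  | empty => simp
  | cons a s ih => simp [ih]

lemma le_cons_cases {α : Type*} [DecidableEq α] {a : α} {Q P : Multiset α} (h : P ≤ a ::ₘ Q) :
    P ≤ Q ∨ ∃ P', P = a ::ₘ P' ∧ P' ≤ Q := by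
  by_cases ha : a ∈ P
  · right
    refine ⟨P.erase a, (Multiset.cons_erase ha).symm, ?_⟩
    have h2 := Multiset.erase_le_erase a h
    rwa [Multiset.erase_cons_head] at h2
  · left
    rw [Multiset.le_iff_count] at h ⊢
    intro b
    by_cases hb : b = a
    · subst hb; simp [Multiset.count_eq_zero_of_notMem ha]
    · have h2 := h b
      rwa [Multiset.count_cons_of_ne hb] at h2

lemma card_four {α : Type*} [DecidableEq α] {a b c d : α} (hab : a ≠ b) (hac : a ≠ c)
    (had : a ≠ d) (hbc : b ≠ c) (hbd : b ≠ d) (hcd : c ≠ d) :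
    ({a, b, c, d} : Finset α).card = 4 := by
  rw [Finset.card_insert_of_notMem (by simp [hab, hac, had]),
    Finset.card_insert_of_notMem (by simp [hbc, hbd]),
    Finset.card_insert_of_notMem (by simp [hcd]), Finset.card_singleton]

lemma card_le_three {α : Type*} [DecidableEq α] (a b c : α) :
    ({a, b, c} : Finset α).card ≤ 3 := by
  have h1 := Finset.card_insert_le a ({b, c} : Finset α)
  have h2 := Finset.card_insert_le b ({c} : Finset α)
  simp only [Finset.card_singleton] at h2
  omega

lemma card_le_four {α : Type*} [DecidableEq α] (a b c d : α) :
    ({a, b, c, d} : Finset α).card ≤ 4 := by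
  have h1 := Finset.card_insert_le a ({b, c, d} : Finset α)
  have h2 := card_le_three b c d
  omega

variable [NeZero n] (hn : 5 ≤ n)

lemma v_lit {k : ℕ} (hk : k < n) : ((k : ZMod n)).val = k := ZMod.val_cast_of_lt hk

include hn in
lemma v1 : (1 : ZMod n).val = 1 := by
  have := v_lit (n := n) (k := 1) (by omega); simpa using this

include hn in
lemma v2 : (2 : ZMod n).val = 2 := by
  have := v_lit (n := n) (k := 2) (by omega); simpa using this

include hn in
lemma two_ne : (2 : ZMod n) ≠ 0 := by
  intro h
  have h2 := v2 hn
  rw [h, ZMod.val_zero] at h2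
  omega

include hn in
lemma add_ne (a : ZMod n) {j k : ℕ} (hjk : j < k) (hk5 : k < 5) :
    a + (j : ZMod n) ≠ a + (k : ZMod n) := by
  intro h
  have h2 : ((j : ℕ) : ZMod n) = (k : ZMod n) := add_left_cancel h
  have h3 := congrArg ZMod.val h2
  rw [v_lit (by omega), v_lit (by omega)] at h3
  omega

include hn in
lemma card_run (a : ZMod n) : ({a, a + 1, a + 2, a + 3} : Finset (ZMod n)).card = 4 := by
  have h01 : a ≠ a + 1 := by simpa using add_ne hn a (j := 0) (k := 1) (by omega) (by omega)
  have h02 : a ≠ a + 2 := by simpa using add_ne hn a (j := 0) (k := 2) (by omega) (by omega)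
  have h03 : a ≠ a + 3 := by simpa using add_ne hn a (j := 0) (k := 3) (by omega) (by omega)
  have h12 : a + 1 ≠ a + 2 := by simpa using add_ne hn a (j := 1) (k := 2) (by omega) (by omega)
  have h13 : a + 1 ≠ a + 3 := by simpa using add_ne hn a (j := 1) (k := 3) (by omega) (by omega)
  have h23 : a + 2 ≠ a + 3 := by simpa using add_ne hn a (j := 2) (k := 3) (by omega) (by omega)
  exact card_four h01 h02 h03 h12 h13 h23

lemma elt_of_val {z : ZMod n} {k : ℕ} (hk0 : 0 < k) (hkn : k ≤ n) (hz : z.val = n - k) :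
    z = -(k : ZMod n) := by
  have h1 : z = ((n - k : ℕ) : ZMod n) := by rw [← hz]; exact (ZMod.natCast_rightInverse z).symm
  rw [h1]
  have h2 : ((n - k : ℕ) : ZMod n) + (k : ZMod n) = 0 := by
    rw [← Nat.cast_add, show n - k + k = n from by omega, ZMod.natCast_self]
  exact eq_neg_of_add_eq_zero_left h2

include hn in
lemma inside_two {a b : ZMod n} (h : Inside a b (a + 2)) : b = a + 1 := by
  obtain ⟨hb1, hb2⟩ := h
  rw [add_sub_cancel_left, v2 hn] at hb2
  have h1 : (b - a).val = 1 := by omega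
  have h2 : b - a = 1 := by
    apply ZMod.val_injective n
    rw [h1, v1 hn]
  have h3 : b = 1 + a := sub_eq_iff_eq_add.mp h2
  rw [h3]; ring

include hn in
lemma inside_mid (a : ZMod n) : Inside a (a + 1) (a + 2) := by
  constructor
  · rw [add_sub_cancel_left, v1 hn]; omega
  · rw [add_sub_cancel_left, add_sub_cancel_left, v1 hn, v2 hn]; omega

include hn in
lemma inside_far {a x : ZMod n} (h0 : x ≠ a) (h1 : x ≠ a + 1) (h2 : x ≠ a + 2) :
    Inside (a + 2) x a := by
  have hsub : x - (a + 2) ≠ 0 := sub_ne_zero.mpr h2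
  have hv0 : 0 < (x - (a + 2)).val :=
    Nat.pos_of_ne_zero fun h => hsub ((ZMod.val_eq_zero _).mp h)
  have hvi : (a - (a + 2)).val = n - 2 := by
    have e : a - (a + 2) = -(2 : ZMod n) := by ring
    rw [e, ZMod.neg_val, if_neg (two_ne hn), v2 hn]
  have hlt : (x - (a + 2)).val < n := ZMod.val_lt _
  have hne1 : (x - (a + 2)).val ≠ n - 1 := by
    intro h
    have he := elt_of_val (k := 1) (by omega) (by omega) h
    have hx : x = a + 1 := by
      have h3 : x = -((1 : ℕ) : ZMod n) + (a + 2) := sub_eq_iff_eq_add.mp he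
      rw [h3]; push_cast; ring
    exact h1 hx
  have hne2 : (x - (a + 2)).val ≠ n - 2 := by
    intro h
    have he := elt_of_val (k := 2) (by omega) (by omega) h
    have hx : x = a := by
      have h3 : x = -((2 : ℕ) : ZMod n) + (a + 2) := sub_eq_iff_eq_add.mp he
      rw [h3]; push_cast; ring
    exact h0 hx
  exact ⟨hv0, by rw [hvi]; omega⟩

end WLDHelpers
/-- let `(Ps,[n])` be an admissible Wilson loop diagram and
`p = (i,i+2) ∈ Ps`.  If `p` is the only propagator incident to the edge `i+2`, then
`(i+1,i+3) ∉ Ps` and replacing `p` by `(i+1,i+3)` gives an admissible diagram;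
symmetrically, if `p` is the only propagator incident to the edge `i`, then
`(i−1,i+1) ∉ Ps` and replacing `p` by `(i−1,i+1)` gives an admissible diagram. -/
theorem statement14 (n : ℕ) (Ps : Multiset (ZMod n × ZMod n))
    (hW : Admissible n Ps) (i : ZMod n) (hp : (i, i + 2) ∈ Ps) :
    ((∀ q ∈ Ps, (q.1 = i + 2 ∨ q.2 = i + 2) → q = (i, i + 2) ∨ q = (i + 2, i)) →
      ((i + 1, i + 3) ∉ Ps ∧ (i + 3, i + 1) ∉ Ps) ∧
      Admissible n ((i + 1, i + 3) ::ₘ Ps.erase (i, i + 2))) ∧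
    ((∀ q ∈ Ps, (q.1 = i ∨ q.2 = i) → q = (i, i + 2) ∨ q = (i + 2, i)) →
      ((i - 1, i + 1) ∉ Ps ∧ (i + 1, i - 1) ∉ Ps) ∧
      Admissible n ((i - 1, i + 1) ::ₘ Ps.erase (i, i + 2))) := by
  obtain ⟨hcross, hdens, hnn⟩ := hW
  have hcard1 : 1 ≤ Multiset.card Ps := by
    rcases Multiset.exists_cons_of_mem hp with ⟨t, ht⟩
    rw [ht]; simp
  have h5 : 5 ≤ n := by omega
  haveI : NeZero n := ⟨by omega⟩
  -- density for singletons
  have dens1 : ∀ q ∈ Ps, 4 ≤ (propSupp q).card := by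
    intro q hq
    have h := hdens {q} (Multiset.singleton_le.mpr hq) (by simp)
    rw [multiSupp_singleton] at h
    simpa using h
  -- small supports
  have card_small : ∀ a b : ZMod n, (b = a ∨ b = a + 1 ∨ a = b + 1) →
      (propSupp (a, b)).card ≤ 3 := by
    intro a b hab
    rcases hab with rfl | rfl | rfl
    · refine le_trans (Finset.card_le_card ?_) (card_le_three b (b + 1) b)
      intro y hy
      simp [propSupp] at hy ⊢
      tauto
    · refine le_trans (Finset.card_le_card ?_) (card_le_three a (a + 1) (a + 1 + 1))
      intro y hy
      simp [propSupp] at hy ⊢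
      tauto
    · refine le_trans (Finset.card_le_card ?_) (card_le_three (b + 1) (b + 1 + 1) b)
      intro y hy
      simp [propSupp] at hy ⊢
      tauto
  -- no propagator of Ps has i+1 as an endpoint
  have noEnd1 : ∀ x : ZMod n, ((i + 1, x) ∈ Ps ∨ (x, i + 1) ∈ Ps) →
      (x = i ∨ x = i + 1 ∨ x = i + 2) → False := by
    intro x hmem hx
    rcases hmem with hmem | hmem
    · have h4 := dens1 _ hmem
      have h3 := card_small (i + 1) x (by
        rcases hx with rfl | rfl | rfl
        · right; right; rfl
        · left; rfl
        · right; left; ring)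
      omega
    · have h4 := dens1 _ hmem
      have h3 := card_small x (i + 1) (by
        rcases hx with rfl | rfl | rfl
        · right; left; rfl
        · left; rfl
        · right; right; ring)
      omega
  have L1 : ∀ q ∈ Ps, q.1 ≠ i + 1 ∧ q.2 ≠ i + 1 := by
    intro q hq
    constructor
    · intro h1
      have hq' : ((i + 1 : ZMod n), q.2) ∈ Ps := by rw [← h1, Prod.mk.eta]; exact hq
      by_cases c0 : q.2 = i
      · exact noEnd1 q.2 (Or.inl hq') (Or.inl c0)
      by_cases c1 : q.2 = i + 1
      · exact noEnd1 q.2 (Or.inl hq') (Or.inr (Or.inl c1))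
      by_cases c2 : q.2 = i + 2
      · exact noEnd1 q.2 (Or.inl hq') (Or.inr (Or.inr c2))
      exact hcross (i, i + 2) hp q hq
        (Or.inl ⟨by rw [h1]; exact inside_mid h5 i, inside_far h5 c0 c1 c2⟩)
    · intro h2
      have hq' : (q.1, (i + 1 : ZMod n)) ∈ Ps := by rw [← h2, Prod.mk.eta]; exact hq
      by_cases c0 : q.1 = i
      · exact noEnd1 q.1 (Or.inr hq') (Or.inl c0)
      by_cases c1 : q.1 = i + 1
      · exact noEnd1 q.1 (Or.inr hq') (Or.inr (Or.inl c1))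
      by_cases c2 : q.1 = i + 2
      · exact noEnd1 q.1 (Or.inr hq') (Or.inr (Or.inr c2))
      exact hcross (i, i + 2) hp q hq
        (Or.inr ⟨by rw [h2]; exact inside_mid h5 i, inside_far h5 c0 c1 c2⟩)
  -- (i,i+2) occurs exactly once
  have hpp_notin : (i, i + 2) ∉ Ps.erase (i, i + 2) := by
    intro h
    have hle : (((i, i + 2) ::ₘ {(i, i + 2)}) : Multiset (ZMod n × ZMod n)) ≤ Ps := by
      calc ((i, i + 2) ::ₘ {(i, i + 2)} : Multiset (ZMod n × ZMod n))
          ≤ (i, i + 2) ::ₘ Ps.erase (i, i + 2) :=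
            Multiset.cons_le_cons _ (Multiset.singleton_le.mpr h)
        _ = Ps := Multiset.cons_erase hp
    have hd := hdens _ hle (by simp)
    rw [multiSupp_cons, multiSupp_singleton, Finset.union_self] at hd
    have hb : (propSupp ((i : ZMod n), i + 2)).card ≤ 4 := by
      rw [show propSupp ((i : ZMod n), i + 2) = {i, i + 1, i + 2, i + 2 + 1} from rfl]
      exact card_le_four _ _ _ _
    simp only [Multiset.card_cons, Multiset.card_singleton] at hd
    omega
  have hqq_notin : ((i + 2 : ZMod n), i) ∉ Ps := by
    intro h
    have hne' : ((i + 2 : ZMod n), i) ≠ (i, i + 2) := by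
      intro hEq
      injection hEq with hEq1 hEq2
      exact (by simpa using add_ne h5 i (j := 0) (k := 2) (by omega) (by omega) :
        (i : ZMod n) ≠ i + 2) hEq1.symm
    have hmem : ((i + 2 : ZMod n), i) ∈ Ps.erase (i, i + 2) :=
      (Multiset.mem_erase_of_ne hne').mpr h
    have hle : (((i, i + 2) ::ₘ {((i + 2 : ZMod n), i)}) : Multiset (ZMod n × ZMod n)) ≤ Ps := by
      calc ((i, i + 2) ::ₘ {((i + 2 : ZMod n), i)} : Multiset (ZMod n × ZMod n))
          ≤ (i, i + 2) ::ₘ Ps.erase (i, i + 2) :=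
            Multiset.cons_le_cons _ (Multiset.singleton_le.mpr hmem)
        _ = Ps := Multiset.cons_erase hp
    have hd := hdens _ hle (by simp)
    rw [multiSupp_cons, multiSupp_singleton] at hd
    have hsub : propSupp ((i : ZMod n), i + 2) ∪ propSupp ((i + 2 : ZMod n), i) ⊆
        ({i, i + 1, i + 2, i + 3} : Finset (ZMod n)) := by
      intro y hy
      rcases Finset.mem_union.mp hy with hy | hy
      · have hy' : y = i ∨ y = i + 1 ∨ y = i + 2 ∨ y = i + 2 + 1 := by
          simpa [propSupp, Finset.mem_insert, Finset.mem_singleton] using hy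
        rw [show (i + 2 + 1 : ZMod n) = i + 3 by ring] at hy'
        simp only [Finset.mem_insert, Finset.mem_singleton]
        tauto
      · have hy' : y = i + 2 ∨ y = i + 2 + 1 ∨ y = i ∨ y = i + 1 := by
          simpa [propSupp, Finset.mem_insert, Finset.mem_singleton] using hy
        rw [show (i + 2 + 1 : ZMod n) = i + 3 by ring] at hy'
        simp only [Finset.mem_insert, Finset.mem_singleton]
        tauto
    have hb := le_trans (Finset.card_le_card hsub) (card_le_four i (i + 1) (i + 2) (i + 3))
    simp only [Multiset.card_cons, Multiset.card_singleton] at hd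
    omega
  constructor
  -- PART 1
  · intro hedge
    have noI2 : ∀ q ∈ Ps.erase (i, i + 2), q.1 ≠ i + 2 ∧ q.2 ≠ i + 2 := by
      intro q hq
      have hqPs := Multiset.mem_of_mem_erase hq
      have hd : q = (i, i + 2) ∨ q = ((i + 2 : ZMod n), i) → False := by
        rintro (rfl | rfl)
        · exact hpp_notin hq
        · exact hqq_notin hqPs
      exact ⟨fun h => hd (hedge q hqPs (Or.inl h)), fun h => hd (hedge q hqPs (Or.inr h))⟩
    have notinA : ((i + 1 : ZMod n), i + 3) ∉ Ps := fun h => (L1 _ h).1 rfl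
    have notinB : ((i + 3 : ZMod n), i + 1) ∉ Ps := fun h => (L1 _ h).2 rfl
    have hnc : ∀ q ∈ Ps.erase (i, i + 2), ¬ Cross (i + 1, i + 3) q := by
      intro q hq hC
      have h13 : (i + 3 : ZMod n) = (i + 1) + 2 := by ring
      rcases hC with ⟨h1, _⟩ | ⟨h1, _⟩
      · have h1' : Inside (i + 1 : ZMod n) q.1 ((i + 1) + 2) := by rw [← h13]; exact h1
        exact (noI2 q hq).1 (by rw [inside_two h5 h1']; ring)
      · have h1' : Inside (i + 1 : ZMod n) q.2 ((i + 1) + 2) := by rw [← h13]; exact h1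
        exact (noI2 q hq).2 (by rw [inside_two h5 h1']; ring)
    have hsupp_card : (propSupp ((i + 1 : ZMod n), i + 3)).card = 4 := by
      have e : propSupp ((i + 1 : ZMod n), i + 3) =
          {i + 1, (i + 1) + 1, (i + 1) + 2, (i + 1) + 3} := by
        show ({i + 1, i + 1 + 1, i + 3, i + 3 + 1} : Finset (ZMod n)) = _
        rw [show (i + 3 + 1 : ZMod n) = (i + 1) + 3 by ring,
          show (i + 3 : ZMod n) = (i + 1) + 2 by ring]
      rw [e]; exact card_run h5 (i + 1)
    have hmem_i2 : (i + 2 : ZMod n) ∈ propSupp ((i + 1 : ZMod n), i + 3) := by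
      have e : (i + 2 : ZMod n) = (i + 1) + 1 := by ring
      rw [e]
      simp [propSupp]
    refine ⟨⟨notinA, notinB⟩, ?_, ?_, ?_⟩
    · intro p' hp' q' hq'
      rcases Multiset.mem_cons.mp hp' with rfl | hp'
      · rcases Multiset.mem_cons.mp hq' with rfl | hq'
        · exact cross_irrefl _
        · exact hnc _ hq'
      · rcases Multiset.mem_cons.mp hq' with rfl | hq'
        · exact fun hC => hnc _ hp' (cross_symm hC)
        · exact hcross _ (Multiset.mem_of_mem_erase hp') _ (Multiset.mem_of_mem_erase hq')
    · intro P hP hP0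
      rcases le_cons_cases hP with hPle | ⟨P', rfl, hP'⟩
      · exact hdens P (le_trans hPle (Multiset.erase_le _ _)) hP0
      · rw [multiSupp_cons, Multiset.card_cons]
        by_cases hP'0 : P' = 0
        · subst hP'0
          simp only [multiSupp_zero, Finset.union_empty, Multiset.card_zero]
          omega
        · have hkey : (i + 2 : ZMod n) ∉ multiSupp P' := by
            intro hmem
            rcases mem_multiSupp.mp hmem with ⟨q, hqP', hq2⟩
            have hqE : q ∈ Ps.erase (i, i + 2) := Multiset.mem_of_le hP' hqP'
            have hqPs := Multiset.mem_of_mem_erase hqE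
            have hq2' : i + 2 = q.1 ∨ i + 2 = q.1 + 1 ∨ i + 2 = q.2 ∨ i + 2 = q.2 + 1 := by
              simpa [propSupp, Finset.mem_insert, Finset.mem_singleton] using hq2
            rcases hq2' with h | h | h | h
            · exact (noI2 q hqE).1 h.symm
            · refine (L1 q hqPs).1 ?_
              have h' : (i + 1 : ZMod n) + 1 = q.1 + 1 := by rw [← h]; ring
              exact (add_right_cancel h').symm
            · exact (noI2 q hqE).2 h.symm
            · refine (L1 q hqPs).2 ?_
              have h' : (i + 1 : ZMod n) + 1 = q.2 + 1 := by rw [← h]; ring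
              exact (add_right_cancel h').symm
          have hins : insert (i + 2 : ZMod n) (multiSupp P') ⊆
              propSupp ((i + 1 : ZMod n), i + 3) ∪ multiSupp P' := by
            intro y hy
            rcases Finset.mem_insert.mp hy with rfl | hy
            · exact Finset.mem_union_left _ hmem_i2
            · exact Finset.mem_union_right _ hy
          have h1 := Finset.card_le_card hins
          rw [Finset.card_insert_of_notMem hkey] at h1
          have h2 := hdens P' (le_trans hP' (Multiset.erase_le _ _)) hP'0
          omega
    · rw [Multiset.card_cons, Multiset.card_erase_of_mem hp, Nat.pred_eq_sub_one]
      omega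
  -- PART 2
  · intro hedge
    have noI0 : ∀ q ∈ Ps.erase (i, i + 2), q.1 ≠ i ∧ q.2 ≠ i := by
      intro q hq
      have hqPs := Multiset.mem_of_mem_erase hq
      have hd : q = (i, i + 2) ∨ q = ((i + 2 : ZMod n), i) → False := by
        rintro (rfl | rfl)
        · exact hpp_notin hq
        · exact hqq_notin hqPs
      exact ⟨fun h => hd (hedge q hqPs (Or.inl h)), fun h => hd (hedge q hqPs (Or.inr h))⟩
    have notinA : ((i - 1 : ZMod n), i + 1) ∉ Ps := fun h => (L1 _ h).2 rfl
    have notinB : ((i + 1 : ZMod n), i - 1) ∉ Ps := fun h => (L1 _ h).1 rfl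
    have hnc : ∀ q ∈ Ps.erase (i, i + 2), ¬ Cross (i - 1, i + 1) q := by
      intro q hq hC
      have h11 : (i + 1 : ZMod n) = (i - 1) + 2 := by ring
      rcases hC with ⟨h1, _⟩ | ⟨h1, _⟩
      · have h1' : Inside (i - 1 : ZMod n) q.1 ((i - 1) + 2) := by rw [← h11]; exact h1
        exact (noI0 q hq).1 (by rw [inside_two h5 h1']; ring)
      · have h1' : Inside (i - 1 : ZMod n) q.2 ((i - 1) + 2) := by rw [← h11]; exact h1
        exact (noI0 q hq).2 (by rw [inside_two h5 h1']; ring)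
    have hsupp_card : (propSupp ((i - 1 : ZMod n), i + 1)).card = 4 := by
      have e : propSupp ((i - 1 : ZMod n), i + 1) =
          {i - 1, (i - 1) + 1, (i - 1) + 2, (i - 1) + 3} := by
        show ({i - 1, i - 1 + 1, i + 1, i + 1 + 1} : Finset (ZMod n)) = _
        rw [show (i + 1 + 1 : ZMod n) = (i - 1) + 3 by ring,
          show (i + 1 : ZMod n) = (i - 1) + 2 by ring]
      rw [e]; exact card_run h5 (i - 1)
    have hmem_i1 : (i + 1 : ZMod n) ∈ propSupp ((i - 1 : ZMod n), i + 1) := by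
      simp [propSupp]
    refine ⟨⟨notinA, notinB⟩, ?_, ?_, ?_⟩
    · intro p' hp' q' hq'
      rcases Multiset.mem_cons.mp hp' with rfl | hp'
      · rcases Multiset.mem_cons.mp hq' with rfl | hq'
        · exact cross_irrefl _
        · exact hnc _ hq'
      · rcases Multiset.mem_cons.mp hq' with rfl | hq'
        · exact fun hC => hnc _ hp' (cross_symm hC)
        · exact hcross _ (Multiset.mem_of_mem_erase hp') _ (Multiset.mem_of_mem_erase hq')
    · intro P hP hP0
      rcases le_cons_cases hP with hPle | ⟨P', rfl, hP'⟩
      · exact hdens P (le_trans hPle (Multiset.erase_le _ _)) hP0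
      · rw [multiSupp_cons, Multiset.card_cons]
        by_cases hP'0 : P' = 0
        · subst hP'0
          simp only [multiSupp_zero, Finset.union_empty, Multiset.card_zero]
          omega
        · have hkey : (i + 1 : ZMod n) ∉ multiSupp P' := by
            intro hmem
            rcases mem_multiSupp.mp hmem with ⟨q, hqP', hq1⟩
            have hqE : q ∈ Ps.erase (i, i + 2) := Multiset.mem_of_le hP' hqP'
            have hqPs := Multiset.mem_of_mem_erase hqE
            have hq1' : i + 1 = q.1 ∨ i + 1 = q.1 + 1 ∨ i + 1 = q.2 ∨ i + 1 = q.2 + 1 := by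
              simpa [propSupp, Finset.mem_insert, Finset.mem_singleton] using hq1
            rcases hq1' with h | h | h | h
            · exact (L1 q hqPs).1 h.symm
            · exact (noI0 q hqE).1 (add_right_cancel h.symm)
            · exact (L1 q hqPs).2 h.symm
            · exact (noI0 q hqE).2 (add_right_cancel h.symm)
          have hins : insert (i + 1 : ZMod n) (multiSupp P') ⊆
              propSupp ((i - 1 : ZMod n), i + 1) ∪ multiSupp P' := by
            intro y hy
            rcases Finset.mem_insert.mp hy with rfl | hy
            · exact Finset.mem_union_left _ hmem_i1
            · exact Finset.mem_union_right _ hy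
          have h1 := Finset.card_le_card hins
          rw [Finset.card_insert_of_notMem hkey] at h1
          have h2 := hdens P' (le_trans hP' (Multiset.erase_le _ _)) hP'0
          omega
    · rw [Multiset.card_cons, Multiset.card_erase_of_mem hp, Nat.pred_eq_sub_one]
      omega
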